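/- Let A be an n×n upper-triangular complex matrix whose diagonal entries all have magnitude at most 1. Then for every positive integer L, every entry of A^L satisfies |(A^L)_{ij}| ≤ (2(1 + ‖A‖)L)^n, and (A^L)_{ij} = 0 whenever i > j. -/

import Mathlib

open scoped Matrix.Norms.L2Operator

-- coordinate of a Euclidean vector is bounded by its norm
lemma coord_le_norm {n : ℕ} (x : EuclideanSpace ℂ (Fin n)) (i : Fin n) :
    ‖x i‖ ≤ ‖x‖ := by
  rw [EuclideanSpace.norm_eq]
  rw [show ‖x i‖ = Real.sqrt (‖x i‖ ^ 2) by rw [Real.sqrt_sq (norm_nonneg _)]]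
  apply Real.sqrt_le_sqrt
  exact Finset.single_le_sum (f := fun k => ‖x k‖ ^ 2)
    (fun k _ => sq_nonneg _) (Finset.mem_univ i)

-- entry of a matrix bounded by L2 operator norm
lemma entry_le_opNorm {n : ℕ} (A : Matrix (Fin n) (Fin n) ℂ) (i j : Fin n) :
    ‖A i j‖ ≤ ‖A‖ := by
  set x : EuclideanSpace ℂ (Fin n) := EuclideanSpace.single j (1 : ℂ) with hx
  have h2 := Matrix.l2_opNorm_mulVec A x
  rw [hx, EuclideanSpace.norm_single, norm_one, mul_one] at h2
  set y : EuclideanSpace ℂ (Fin n) := (EuclideanSpace.equiv (Fin n) ℂ).symm (A.mulVec x) with hy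
  have hyi : y i = A i j := by
    simp [hy, hx, Matrix.mulVec, dotProduct, EuclideanSpace.single_apply]
  calc ‖A i j‖ = ‖y i‖ := by rw [hyi]
    _ ≤ ‖y‖ := coord_le_norm y i
    _ ≤ ‖A‖ := h2

-- a^d + d * b * a^(d-1) ≤ (a+b)^d, stated for d+1 to avoid truncated subtraction
lemma aux_pow_ineq (a b : ℝ) (ha : 0 ≤ a) (hb : 0 ≤ b) :
    ∀ d : ℕ, a ^ (d + 1) + (d + 1 : ℝ) * b * a ^ d ≤ (a + b) ^ (d + 1) := by
  intro d
  induction d with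
  | zero => simp
  | succ d ih =>
    have hpow : (0:ℝ) ≤ a ^ d := pow_nonneg ha d
    have step : a ^ (d + 1 + 1) + (d + 1 + 1 : ℝ) * b * a ^ (d + 1)
        ≤ (a + b) * (a ^ (d + 1) + (d + 1 : ℝ) * b * a ^ d) := by
      have hd0 : (0:ℝ) ≤ (d:ℝ) := Nat.cast_nonneg d
      ring_nf
      nlinarith [mul_nonneg (mul_nonneg hb hb) hpow,
        mul_nonneg (mul_nonneg (mul_nonneg hd0 hb) hb) hpow]
    push_cast
    calc a ^ (d + 1 + 1) + (d + 1 + 1 : ℝ) * b * a ^ (d + 1)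
        ≤ (a + b) * (a ^ (d + 1) + (d + 1 : ℝ) * b * a ^ d) := step
      _ ≤ (a + b) * (a + b) ^ (d + 1) :=
          mul_le_mul_of_nonneg_left ih (by linarith)
      _ = (a + b) ^ (d + 1 + 1) := by ring

/-- If `A` is an `n × n` upper-triangular complex matrix whose diagonal entries
all have magnitude at most `1`, then for every positive integer `L`, every entry of `A ^ L`
satisfies `|(A ^ L) i j| ≤ (2 * (1 + ‖A‖) * L) ^ n`, and `(A ^ L) i j = 0` whenever `i > j`.
Here `‖·‖` is the operator (spectral) norm. -/
theorem entries_of_power_of_upper_triangular (n : ℕ) (A : Matrix (Fin n) (Fin n) ℂ)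
    (hupper : ∀ i j : Fin n, (j : ℕ) < (i : ℕ) → A i j = 0)
    (hdiag : ∀ i : Fin n, ‖A i i‖ ≤ 1)
    (L : ℕ) (hL : 0 < L) :
    (∀ i j : Fin n, ‖(A ^ L) i j‖ ≤ (2 * (1 + ‖A‖) * (L : ℝ)) ^ n) ∧
      (∀ i j : Fin n, (j : ℕ) < (i : ℕ) → (A ^ L) i j = 0) := by
  set M : ℝ := 1 + ‖A‖ with hM
  have hM1 : (1:ℝ) ≤ M := by simp [hM, norm_nonneg]
  have hA_entry : ∀ i j : Fin n, ‖A i j‖ ≤ M := fun i j =>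
    (entry_le_opNorm A i j).trans (by simp [hM])
  -- main induction claim
  have key : ∀ K : ℕ, 1 ≤ K →
      (∀ i j : Fin n, (j : ℕ) < (i : ℕ) → (A ^ K) i j = 0) ∧
      (∀ i j : Fin n, (i : ℕ) ≤ (j : ℕ) →
        ‖(A ^ K) i j‖ ≤ (2 * M * K) ^ ((j : ℕ) - (i : ℕ))) := by
    intro K hK
    induction K, hK using Nat.le_induction with
    | base =>
      constructor
      · intro i j hij; simpa using hupper i j hij
      · intro i j hij
        rw [pow_one]
        rcases eq_or_lt_of_le hij with heq | hlt
        · have : i = j := Fin.ext heq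
          subst this
          simpa using hdiag i
        · have hd : 1 ≤ (j : ℕ) - (i : ℕ) := by omega
          have h2M : (1:ℝ) ≤ 2 * M * 1 := by linarith
          calc ‖A i j‖ ≤ M := hA_entry i j
            _ ≤ 2 * M * 1 := by linarith
            _ ≤ (2 * M * 1) ^ ((j : ℕ) - (i : ℕ)) := le_self_pow₀ h2M (by omega)
            _ = (2 * M * ((1:ℕ):ℝ)) ^ ((j : ℕ) - (i : ℕ)) := by norm_num
    | succ K hK ih =>
      obtain ⟨ih0, ihb⟩ := ih
      have hpow : ∀ i j : Fin n, (A ^ (K + 1)) i j = ∑ k, (A ^ K) i k * A k j := by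
        intro i j; rw [pow_succ, Matrix.mul_apply]
      constructor
      · intro i j hij
        rw [hpow]
        apply Finset.sum_eq_zero
        intro k _
        by_cases hk : (k : ℕ) < (i : ℕ)
        · rw [ih0 i k hk, zero_mul]
        · rw [hupper k j (by omega), mul_zero]
      · intro i j hij
        set d : ℕ := (j : ℕ) - (i : ℕ) with hd
        clear_value d
        have h2ML1 : (1:ℝ) ≤ 2 * M * K := by
          have : (1:ℝ) ≤ (K:ℝ) := by exact_mod_cast hK
          nlinarith
        have h2ML0 : (0:ℝ) ≤ 2 * M * K := by linarith
        rw [hpow]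
        have hle : i ≤ j := by exact_mod_cast hij
        have hstep : ‖∑ k, (A ^ K) i k * A k j‖
            ≤ ∑ k ∈ Finset.Icc i j, ‖(A ^ K) i k * A k j‖ := by
          refine (norm_sum_le _ _).trans (le_of_eq ?_)
          symm
          apply Finset.sum_subset (Finset.subset_univ _)
          intro k _ hk
          simp only [Finset.mem_Icc, not_and_or, not_le] at hk
          rcases hk with hk | hk
          · rw [ih0 i k (by exact_mod_cast hk), zero_mul, norm_zero]
          · rw [hupper k j (by exact_mod_cast hk), mul_zero, norm_zero]
        rw [← Finset.Ico_insert_right hle, Finset.sum_insert Finset.right_notMem_Ico] at hstep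
        have hjterm : ‖(A ^ K) i j * A j j‖ ≤ (2 * M * K) ^ d := by
          rw [norm_mul]
          calc ‖(A ^ K) i j‖ * ‖A j j‖
              ≤ (2 * M * K) ^ d * 1 :=
                mul_le_mul (hd ▸ ihb i j hij) (hdiag j) (norm_nonneg _)
                  (pow_nonneg h2ML0 d)
            _ = (2 * M * K) ^ d := mul_one _
        have hrest : ∑ k ∈ Finset.Ico i j, ‖(A ^ K) i k * A k j‖
            ≤ (d : ℝ) * ((2 * M * K) ^ (d - 1) * M) := by
          have hcard : (Finset.Ico i j).card = d := by
            rw [Fin.card_Ico]; omega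
          calc ∑ k ∈ Finset.Ico i j, ‖(A ^ K) i k * A k j‖
              ≤ ∑ _k ∈ Finset.Ico i j, (2 * M * K) ^ (d - 1) * M := by
                apply Finset.sum_le_sum
                intro k hk
                rw [Finset.mem_Ico] at hk
                have hik : (i : ℕ) ≤ (k : ℕ) := by exact_mod_cast hk.1
                have hkj : (k : ℕ) < (j : ℕ) := by exact_mod_cast hk.2
                rw [norm_mul]
                apply mul_le_mul (le_trans (ihb i k hik) ?_) (hA_entry k j)
                  (norm_nonneg _) (pow_nonneg h2ML0 _)
                exact pow_le_pow_right₀ h2ML1 (by omega)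
            _ = (d : ℝ) * ((2 * M * K) ^ (d - 1) * M) := by
                rw [Finset.sum_const, hcard, nsmul_eq_mul]
        have hcombine : ‖∑ k, (A ^ K) i k * A k j‖
            ≤ (2 * M * K) ^ d + (d : ℝ) * ((2 * M * K) ^ (d - 1) * M) := by
          calc ‖∑ k, (A ^ K) i k * A k j‖
              ≤ _ := hstep
            _ ≤ (2 * M * K) ^ d + (d : ℝ) * ((2 * M * K) ^ (d - 1) * M) :=
                add_le_add hjterm hrest
        refine hcombine.trans ?_
        -- arithmetic: (2MK)^d + d*(2MK)^(d-1)*M ≤ (2M(K+1))^d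
        rcases Nat.eq_zero_or_pos d with hd0 | hdpos
        · subst hd0; simp
        · obtain ⟨e, rfl⟩ : ∃ e, d = e + 1 := ⟨d - 1, by omega⟩
          have haux := aux_pow_ineq (2 * M * K) (2 * M) h2ML0 (by linarith) e
          have h1 : (e + 1 : ℝ) * ((2 * M * K) ^ (e + 1 - 1) * M)
              ≤ (e + 1 : ℝ) * (2 * M) * (2 * M * K) ^ e := by
            have hp : (0:ℝ) ≤ (2 * M * K) ^ e := pow_nonneg h2ML0 e
            have he : (0:ℝ) ≤ (e:ℝ) + 1 := by positivity
            simp only [Nat.add_sub_cancel]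
            calc (e + 1 : ℝ) * ((2 * M * K) ^ e * M)
                = ((e + 1 : ℝ) * M) * (2 * M * K) ^ e := by ring
              _ ≤ ((e + 1 : ℝ) * (2 * M)) * (2 * M * K) ^ e := by
                  apply mul_le_mul_of_nonneg_right _ hp
                  apply mul_le_mul_of_nonneg_left _ he
                  linarith
              _ = (e + 1 : ℝ) * (2 * M) * (2 * M * K) ^ e := by ring
          have h2 : (2 * M * K + 2 * M) = 2 * M * ((K:ℝ) + 1) := by ring
          push_cast
          calc (2 * M * K) ^ (e + 1) + ((e:ℝ) + 1) * ((2 * M * K) ^ (e + 1 - 1) * M)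
              ≤ (2 * M * K) ^ (e + 1) + ((e:ℝ) + 1) * (2 * M) * (2 * M * K) ^ e := by
                push_cast at h1 ⊢; linarith
            _ ≤ (2 * M * K + 2 * M) ^ (e + 1) := haux
            _ = (2 * M * ((K:ℝ) + 1)) ^ (e + 1) := by rw [h2]
  obtain ⟨h0, hb⟩ := key L hL
  refine ⟨fun i j => ?_, h0⟩
  have h2ML1 : (1:ℝ) ≤ 2 * M * L := by
    have : (1:ℝ) ≤ (L:ℝ) := by exact_mod_cast hL
    nlinarith
  by_cases hij : (i : ℕ) ≤ (j : ℕ)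
  · calc ‖(A ^ L) i j‖ ≤ (2 * M * L) ^ ((j : ℕ) - (i : ℕ)) := hb i j hij
      _ ≤ (2 * M * L) ^ n := pow_le_pow_right₀ h2ML1 (by omega)
  · rw [h0 i j (by omega), norm_zero]
    positivity
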